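/- Every isolated point of the spectrum of a bounded totally paranormal operator is an eigenvalue. -/

import Mathlib

open Metric Complex Set Pointwise

set_option linter.unusedSectionVars false
set_option maxHeartbeats 1000000

lemma circleIntegral_comp_clm {E F : Type*} [NormedAddCommGroup E] [NormedSpace ℂ E]
    [CompleteSpace E] [NormedAddCommGroup F] [NormedSpace ℂ F] [CompleteSpace F]
    (L : E →L[ℂ] F) {f : ℂ → E} {c : ℂ} {R : ℝ} (hf : CircleIntegrable f c R) :
    L (∮ z in C(c, R), f z) = ∮ z in C(c, R), L (f z) := by
  rw [circleIntegral, circleIntegral, ← L.intervalIntegral_comp_comm hf.out]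
  simp_rw [L.map_smul]

section BanachAlg

variable {A : Type*} [NormedRing A] [NormedAlgebra ℂ A] [CompleteSpace A]
variable {a : A} {r : ℝ}

lemma resolvent_mul_left' {a : A} {z : ℂ} (hz : IsUnit (z • (1 : A) - a)) :
    a * resolvent a z = z • resolvent a z - 1 := by
  have hz' : IsUnit (algebraMap ℂ A z - a) := by rwa [Algebra.algebraMap_eq_smul_one]
  have h1 : (algebraMap ℂ A z - a) * resolvent a z = 1 := by
    rw [resolvent]; exact Ring.mul_inverse_cancel _ hz'
  rw [Algebra.algebraMap_eq_smul_one, sub_mul, smul_mul_assoc, one_mul] at h1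
  rw [← h1]; abel

lemma res_diff' (hres : ∀ z : ℂ, z ≠ 0 → ‖z‖ < r → IsUnit (z • (1 : A) - a))
    {z : ℂ} (h1 : z ≠ 0) (h2 : ‖z‖ < r) : DifferentiableAt ℂ (resolvent a) z := by
  have : z ∈ resolventSet ℂ a := by
    rw [spectrum.mem_resolventSet_iff, Algebra.algebraMap_eq_smul_one]
    exact hres z h1 h2
  exact (spectrum.hasDerivAt_resolvent this).differentiableAt

lemma sphere_mem' {ρ : ℝ} (hρ : 0 < ρ) (hρr : ρ < r) {z : ℂ} (hz : z ∈ sphere (0:ℂ) ρ) :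
    z ≠ 0 ∧ ‖z‖ < r := by
  rw [mem_sphere_zero_iff_norm] at hz
  refine ⟨?_, by rw [hz]; exact hρr⟩
  intro h; rw [h] at hz; simp at hz; linarith

lemma res_contOn' (hres : ∀ z : ℂ, z ≠ 0 → ‖z‖ < r → IsUnit (z • (1 : A) - a))
    {ρ : ℝ} (hρ : 0 < ρ) (hρr : ρ < r) : ContinuousOn (resolvent a) (sphere (0:ℂ) ρ) :=
  fun z hz => by
    obtain ⟨h1, h2⟩ := sphere_mem' hρ hρr hz
    exact (res_diff' hres h1 h2).continuousAt.continuousWithinAt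

lemma res_integrable' (hres : ∀ z : ℂ, z ≠ 0 → ‖z‖ < r → IsUnit (z • (1 : A) - a))
    {ρ : ℝ} (hρ : 0 < ρ) (hρr : ρ < r) (g : ℂ → ℂ) (hg : ContinuousOn g (sphere (0:ℂ) ρ)) :
    CircleIntegrable (fun z => g z • resolvent a z) 0 ρ :=
  (hg.smul (res_contOn' hres hρ hρr)).circleIntegrable hρ.le

lemma pow_smul_one_integral_zero' (n : ℕ) (ρ : ℝ) :
    (∮ z in C((0:ℂ), ρ), z ^ n • (1 : A)) = 0 := by
  rw [circleIntegral.integral_smul_const]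
  have h := circleIntegral.integral_sub_zpow_of_ne (n := (n : ℤ)) (by omega) (0 : ℂ) 0 ρ
  simp only [sub_zero, zpow_natCast] at h
  rw [h, zero_smul]

-- recursion
lemma moment_rec (hres : ∀ z : ℂ, z ≠ 0 → ‖z‖ < r → IsUnit (z • (1 : A) - a))
    {ρ : ℝ} (hρ : 0 < ρ) (hρr : ρ < r) (n : ℕ) :
    a * (∮ z in C((0:ℂ), ρ), z ^ n • resolvent a z)
      = ∮ z in C((0:ℂ), ρ), z ^ (n + 1) • resolvent a z := by
  have hint := res_integrable' hres hρ hρr (fun z => z ^ n)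
    (Continuous.continuousOn (by continuity))
  have h1 : a * (∮ z in C((0:ℂ), ρ), z ^ n • resolvent a z)
      = ∮ z in C((0:ℂ), ρ), a * (z ^ n • resolvent a z) := by
    exact circleIntegral_comp_clm (ContinuousLinearMap.mul ℂ A a) hint
  rw [h1]
  have h2 : (∮ z in C((0:ℂ), ρ), a * (z ^ n • resolvent a z))
      = ∮ z in C((0:ℂ), ρ), (z ^ (n+1) • resolvent a z - z ^ n • (1:A)) := by
    refine circleIntegral.integral_congr hρ.le (fun z hz => ?_)
    obtain ⟨hz1, hz2⟩ := sphere_mem' hρ hρr hz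
    rw [mul_smul_comm, resolvent_mul_left' (hres z hz1 hz2), smul_sub, smul_smul,
      pow_succ, mul_comm]
  have hi2 : CircleIntegrable (fun z : ℂ => z ^ n • (1 : A)) 0 ρ :=
    ContinuousOn.circleIntegrable hρ.le ((continuous_pow n).continuousOn.smul continuousOn_const)
  rw [h2, circleIntegral.integral_sub
    (res_integrable' hres hρ hρr (fun z => z ^ (n+1)) (Continuous.continuousOn (by continuity)))
    hi2, pow_smul_one_integral_zero', sub_zero]

-- radius independence of the Riesz projection integral
lemma proj_indep (hres : ∀ z : ℂ, z ≠ 0 → ‖z‖ < r → IsUnit (z • (1 : A) - a))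
    {ρ₁ ρ₂ : ℝ} (h0 : 0 < ρ₁) (hle : ρ₁ ≤ ρ₂) (h2 : ρ₂ < r) :
    (∮ z in C((0:ℂ), ρ₂), resolvent a z) = ∮ z in C((0:ℂ), ρ₁), resolvent a z := by
  refine circleIntegral_eq_of_differentiable_on_annulus_off_countable h0 hle
    countable_empty (fun z hz => ?_) (fun z hz => ?_)
  · obtain ⟨hz1, hz2⟩ := hz
    rw [mem_closedBall, dist_zero_right] at hz1
    rw [mem_ball, dist_zero_right, not_lt] at hz2
    have hz0 : z ≠ 0 := by
      intro h; rw [h] at hz2; simp at hz2; linarith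
    exact ((res_diff' hres hz0 (lt_of_le_of_lt hz1 h2)).continuousAt).continuousWithinAt
  · obtain ⟨⟨hz1, hz2⟩, -⟩ := hz
    rw [mem_ball, dist_zero_right] at hz1
    rw [mem_closedBall, dist_zero_right, not_le] at hz2
    have hz0 : z ≠ 0 := by
      intro h; rw [h] at hz2; simp at hz2; linarith
    exact res_diff' hres hz0 (hz1.trans h2)

-- norm bound on moments
lemma moment_bound (hres : ∀ z : ℂ, z ≠ 0 → ‖z‖ < r → IsUnit (z • (1 : A) - a))
    {ρ : ℝ} (hρ : 0 < ρ) (hρr : ρ < r) {M : ℝ}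
    (hM : ∀ z ∈ sphere (0:ℂ) ρ, ‖resolvent a z‖ ≤ M) (n : ℕ) :
    ‖∮ z in C((0:ℂ), ρ), z ^ n • resolvent a z‖ ≤ 2 * Real.pi * ρ * (ρ ^ n * M) := by
  have := circleIntegral.norm_integral_le_of_norm_le_const (c := (0:ℂ))
    (f := fun z => z ^ n • resolvent a z) (C := ρ ^ n * M) hρ.le (fun z hz => ?_)
  · simpa using this
  · have hz := mem_sphere_zero_iff_norm.mp hz
    rw [norm_smul, norm_pow, hz]
    have h0 : (0:ℝ) ≤ ρ ^ n := by positivity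
    exact mul_le_mul_of_nonneg_left (hM z (by rwa [mem_sphere_zero_iff_norm])) h0

-- existence of a bound M ≥ 0
lemma res_bound (hres : ∀ z : ℂ, z ≠ 0 → ‖z‖ < r → IsUnit (z • (1 : A) - a))
    {ρ : ℝ} (hρ : 0 < ρ) (hρr : ρ < r) :
    ∃ M : ℝ, 0 ≤ M ∧ ∀ z ∈ sphere (0:ℂ) ρ, ‖resolvent a z‖ ≤ M := by
  obtain ⟨M, hM⟩ := (isCompact_sphere (0:ℂ) ρ).exists_bound_of_continuousOn
    (res_contOn' hres hρ hρr)
  exact ⟨max M 0, le_max_right _ _, fun z hz => (hM z hz).trans (le_max_left _ _)⟩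

-- the key identity: a * B = P - (2πi) • 1
lemma inv_moment_left (hres : ∀ z : ℂ, z ≠ 0 → ‖z‖ < r → IsUnit (z • (1 : A) - a))
    {ρ : ℝ} (hρ : 0 < ρ) (hρr : ρ < r) :
    a * (∮ z in C((0:ℂ), ρ), z⁻¹ • resolvent a z)
      = (∮ z in C((0:ℂ), ρ), resolvent a z) - (2 * Real.pi * I) • 1 := by
  have hcont : ContinuousOn (fun z : ℂ => z⁻¹) (sphere (0:ℂ) ρ) := by
    intro z hz
    exact (continuousAt_inv₀ (sphere_mem' hρ hρr hz).1).continuousWithinAt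
  have hint := res_integrable' hres hρ hρr (fun z => z⁻¹) hcont
  have h1 : a * (∮ z in C((0:ℂ), ρ), z⁻¹ • resolvent a z)
      = ∮ z in C((0:ℂ), ρ), (ContinuousLinearMap.mul ℂ A a) (z⁻¹ • resolvent a z) :=
    circleIntegral_comp_clm (ContinuousLinearMap.mul ℂ A a) hint
  rw [h1]
  have h2 : (∮ z in C((0:ℂ), ρ), (ContinuousLinearMap.mul ℂ A a) (z⁻¹ • resolvent a z))
      = ∮ z in C((0:ℂ), ρ), (resolvent a z - z⁻¹ • (1:A)) := by
    refine circleIntegral.integral_congr hρ.le (fun z hz => ?_)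
    obtain ⟨hz1, hz2⟩ := sphere_mem' hρ hρr hz
    simp only [ContinuousLinearMap.mul_apply']
    rw [mul_smul_comm, resolvent_mul_left' (hres z hz1 hz2), smul_sub, smul_smul,
      inv_mul_cancel₀ hz1, one_smul]
  have hi1 : CircleIntegrable (resolvent a) 0 ρ :=
    (res_contOn' hres hρ hρr).circleIntegrable hρ.le
  have hi2 : CircleIntegrable (fun z : ℂ => z⁻¹ • (1:A)) 0 ρ :=
    ContinuousOn.circleIntegrable hρ.le (hcont.smul continuousOn_const)
  rw [h2, circleIntegral.integral_sub hi1 hi2, circleIntegral.integral_smul_const]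
  congr 1
  have h := circleIntegral.integral_sub_center_inv (0 : ℂ) (R := ρ) hρ.ne'
  simp only [sub_zero] at h
  rw [h]

lemma resolvent_mul_right' {a : A} {z : ℂ} (hz : IsUnit (z • (1 : A) - a)) :
    resolvent a z * a = z • resolvent a z - 1 := by
  have hz' : IsUnit (algebraMap ℂ A z - a) := by rwa [Algebra.algebraMap_eq_smul_one]
  have h1 : resolvent a z * (algebraMap ℂ A z - a) = 1 := by
    rw [resolvent]; exact Ring.inverse_mul_cancel _ hz'
  rw [Algebra.algebraMap_eq_smul_one, mul_sub, mul_smul_comm, mul_one] at h1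
  rw [← h1]; abel

lemma inv_moment_right (hres : ∀ z : ℂ, z ≠ 0 → ‖z‖ < r → IsUnit (z • (1 : A) - a))
    {ρ : ℝ} (hρ : 0 < ρ) (hρr : ρ < r) :
    (∮ z in C((0:ℂ), ρ), z⁻¹ • resolvent a z) * a
      = (∮ z in C((0:ℂ), ρ), resolvent a z) - (2 * Real.pi * I) • 1 := by
  have hcont : ContinuousOn (fun z : ℂ => z⁻¹) (sphere (0:ℂ) ρ) := by
    intro z hz
    exact (continuousAt_inv₀ (sphere_mem' hρ hρr hz).1).continuousWithinAt
  have hint := res_integrable' hres hρ hρr (fun z => z⁻¹) hcont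
  have h1 : (∮ z in C((0:ℂ), ρ), z⁻¹ • resolvent a z) * a
      = ∮ z in C((0:ℂ), ρ), ((ContinuousLinearMap.mul ℂ A).flip a) (z⁻¹ • resolvent a z) :=
    circleIntegral_comp_clm ((ContinuousLinearMap.mul ℂ A).flip a) hint
  rw [h1]
  have h2 : (∮ z in C((0:ℂ), ρ), ((ContinuousLinearMap.mul ℂ A).flip a) (z⁻¹ • resolvent a z))
      = ∮ z in C((0:ℂ), ρ), (resolvent a z - z⁻¹ • (1:A)) := by
    refine circleIntegral.integral_congr hρ.le (fun z hz => ?_)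
    obtain ⟨hz1, hz2⟩ := sphere_mem' hρ hρr hz
    simp only [ContinuousLinearMap.flip_apply, ContinuousLinearMap.mul_apply']
    rw [smul_mul_assoc, resolvent_mul_right' (hres z hz1 hz2), smul_sub, smul_smul,
      inv_mul_cancel₀ hz1, one_smul]
  have hi1 : CircleIntegrable (resolvent a) 0 ρ :=
    (res_contOn' hres hρ hρr).circleIntegrable hρ.le
  have hi2 : CircleIntegrable (fun z : ℂ => z⁻¹ • (1:A)) 0 ρ :=
    ContinuousOn.circleIntegrable hρ.le (hcont.smul continuousOn_const)
  rw [h2, circleIntegral.integral_sub hi1 hi2, circleIntegral.integral_smul_const]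
  congr 1
  have h := circleIntegral.integral_sub_center_inv (0 : ℂ) (R := ρ) hρ.ne'
  simp only [sub_zero] at h
  rw [h]

-- if P = 0 then a is a unit
lemma isUnit_of_proj_zero (hres : ∀ z : ℂ, z ≠ 0 → ‖z‖ < r → IsUnit (z • (1 : A) - a))
    {ρ : ℝ} (hρ : 0 < ρ) (hρr : ρ < r)
    (hP : (∮ z in C((0:ℂ), ρ), resolvent a z) = 0) : IsUnit a := by
  set B := ∮ z in C((0:ℂ), ρ), z⁻¹ • resolvent a z with hB
  have hL := inv_moment_left hres hρ hρr
  have hR := inv_moment_right hres hρ hρr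
  rw [hP, zero_sub] at hL hR
  have hc : (2 * Real.pi * I : ℂ) ≠ 0 := by
    simp [Real.pi_ne_zero, I_ne_zero]
  set c : ℂ := -(2 * Real.pi * I)⁻¹ with hcdef
  refine ⟨⟨a, c • B, ?_, ?_⟩, rfl⟩
  · rw [mul_smul_comm, hL, smul_neg, smul_smul, hcdef, neg_mul, inv_mul_cancel₀ hc]
    simp
  · rw [smul_mul_assoc, hR, smul_neg, smul_smul, hcdef, neg_mul, inv_mul_cancel₀ hc]
    simp

end BanachAlg

section Para
variable {H : Type*} [NormedAddCommGroup H] [NormedSpace ℂ H]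

lemma para_ratio (S : H →L[ℂ] H) (h : ∀ v, ‖S v‖ ^ 2 ≤ ‖S (S v)‖ * ‖v‖) (x : H) :
    ∀ n : ℕ, ‖(S ^ n) x‖ * ‖S x‖ ≤ ‖(S ^ (n + 1)) x‖ * ‖x‖ := by
  intro n
  induction n with
  | zero =>
    simp only [pow_zero, pow_one, ContinuousLinearMap.one_apply]
    exact le_of_eq (mul_comm _ _)
  | succ n ih =>
    have e1 : S ((S ^ n) x) = (S ^ (n + 1)) x := by
      rw [pow_succ']; rfl
    have e2 : S ((S ^ (n + 1)) x) = (S ^ (n + 2)) x := by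
      rw [pow_succ' S (n + 1)]; rfl
    have hsq : ‖(S ^ (n + 1)) x‖ ^ 2 ≤ ‖(S ^ (n + 2)) x‖ * ‖(S ^ n) x‖ := by
      have hh := h ((S ^ n) x)
      rw [e1] at hh
      rw [e2] at hh
      exact hh
    rcases eq_or_lt_of_le (norm_nonneg ((S ^ (n + 1)) x)) with hb | hb
    · rw [← hb, zero_mul]; positivity
    · have h1 : ‖(S ^ (n + 1)) x‖ * (‖(S ^ (n + 1)) x‖ * ‖S x‖)
          ≤ ‖(S ^ (n + 1)) x‖ * (‖(S ^ (n + 2)) x‖ * ‖x‖) := by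
        nlinarith [mul_le_mul_of_nonneg_right hsq (norm_nonneg (S x)),
          mul_le_mul_of_nonneg_left ih (norm_nonneg ((S ^ (n + 2)) x))]
      exact le_of_mul_le_mul_left h1 hb

lemma para_pow (S : H →L[ℂ] H) (h : ∀ v, ‖S v‖ ^ 2 ≤ ‖S (S v)‖ * ‖v‖) (x : H) :
    ∀ n : ℕ, ‖S x‖ ^ (n + 1) ≤ ‖(S ^ (n + 1)) x‖ * ‖x‖ ^ n := by
  intro n
  induction n with
  | zero => simp [pow_one]
  | succ n ih =>
    have hr := para_ratio S h x (n + 1)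
    calc ‖S x‖ ^ (n + 2) = ‖S x‖ ^ (n + 1) * ‖S x‖ := by ring
      _ ≤ (‖(S ^ (n + 1)) x‖ * ‖x‖ ^ n) * ‖S x‖ :=
        mul_le_mul_of_nonneg_right ih (norm_nonneg _)
      _ = (‖(S ^ (n + 1)) x‖ * ‖S x‖) * ‖x‖ ^ n := by ring
      _ ≤ (‖(S ^ (n + 2)) x‖ * ‖x‖) * ‖x‖ ^ n :=
        mul_le_mul_of_nonneg_right hr (by positivity)
      _ = ‖(S ^ (n + 2)) x‖ * ‖x‖ ^ (n + 1) := by ring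

end Para


theorem stmt_12 {H : Type*} [NormedAddCommGroup H] [InnerProductSpace ℂ H]
    [CompleteSpace H] (T : H →L[ℂ] H)
    (hT : ∀ (lam : ℂ) (x : H),
      ‖(T - lam • 1) x‖ ^ 2 ≤ ‖((T - lam • 1) ∘L (T - lam • 1)) x‖ * ‖x‖)
    (μ : ℂ) (hμ : μ ∈ spectrum ℂ T)
    (hiso : ∃ r > 0, Metric.ball μ r ∩ spectrum ℂ T = {μ}) :
    LinearMap.ker ((T - μ • 1 : H →L[ℂ] H) : H →ₗ[ℂ] H) ≠ ⊥ := by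
  obtain ⟨r, hr, hball⟩ := hiso
  set S : H →L[ℂ] H := T - μ • 1 with hS
  have h0 : (0 : ℂ) ∈ spectrum ℂ S := by
    have h' : μ - μ ∈ spectrum ℂ T - {μ} := Set.sub_mem_sub hμ rfl
    rw [sub_self, spectrum.sub_singleton_eq] at h'
    rwa [Algebra.algebraMap_eq_smul_one] at h'
  have hres : ∀ z : ℂ, z ≠ 0 → ‖z‖ < r → IsUnit (z • (1 : H →L[ℂ] H) - S) := by
    intro z hz hzr
    have hmem : z + μ ∉ spectrum ℂ T := by
      intro hmem
      have hball' : z + μ ∈ Metric.ball μ r ∩ spectrum ℂ T :=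
        ⟨by simpa [Metric.mem_ball, dist_eq_norm] using hzr, hmem⟩
      rw [hball] at hball'
      exact hz (by simpa [sub_eq_zero] using hball')
    have hu : IsUnit (algebraMap ℂ (H →L[ℂ] H) (z + μ) - T) := spectrum.notMem_iff.mp hmem
    have heq : z • (1 : H →L[ℂ] H) - S = algebraMap ℂ (H →L[ℂ] H) (z + μ) - T := by
      rw [Algebra.algebraMap_eq_smul_one, add_smul, hS]; abel
    rwa [heq]
  by_contra hker
  have hinj : ∀ v : H, S v = 0 → v = 0 := LinearMap.ker_eq_bot'.mp hker
  set P : H →L[ℂ] H := ∮ z in C((0 : ℂ), r / 2), resolvent S z with hP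
  have hSP : ∀ y : H, S (P y) = 0 := by
    intro y
    by_contra hne
    have he : 0 < ‖S (P y)‖ := norm_pos_iff.mpr hne
    set x := P y with hx
    have hd : 0 < ‖x‖ := by
      by_contra hcon
      push_neg at hcon
      have hx0 : x = 0 := norm_eq_zero.mp (le_antisymm hcon (norm_nonneg x))
      exact hne (by rw [hx0, map_zero])
    set e := ‖S x‖ with hedef
    set d := ‖x‖ with hddef
    set ρ := min (r / 2) (e / (2 * d)) with hρdef
    have hρ0 : 0 < ρ := lt_min (by linarith) (by positivity)
    have hρr : ρ < r := lt_of_le_of_lt (min_le_left _ _) (by linarith)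
    obtain ⟨M, hM0, hM⟩ := res_bound hres hρ0 hρr
    have hPρ : (∮ z in C((0 : ℂ), ρ), resolvent S z) = P := by
      rcases le_total ρ (r / 2) with hc | hc
      · exact (proj_indep hres hρ0 hc (by linarith)).symm
      · exact proj_indep hres (by linarith) hc hρr
    have hmom : ∀ n : ℕ, S ^ n * P = ∮ z in C((0 : ℂ), ρ), z ^ n • resolvent S z := by
      intro n
      induction n with
      | zero =>
        rw [pow_zero, one_mul, ← hPρ]
        exact (circleIntegral.integral_congr hρ0.le fun z hz => by simp).symm
      | succ n ih =>
        rw [pow_succ' S n, mul_assoc, ih, moment_rec hres hρ0 hρr n]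
    have hn : ∀ n : ℕ, ‖(S ^ n) x‖ ≤ 2 * Real.pi * ρ * (ρ ^ n * M) * ‖y‖ := by
      intro n
      have h1 : (S ^ n) x = (S ^ n * P) y := rfl
      rw [h1, hmom n]
      calc ‖(∮ z in C((0 : ℂ), ρ), z ^ n • resolvent S z) y‖
          ≤ ‖∮ z in C((0 : ℂ), ρ), z ^ n • resolvent S z‖ * ‖y‖ :=
            ContinuousLinearMap.le_opNorm _ _
        _ ≤ 2 * Real.pi * ρ * (ρ ^ n * M) * ‖y‖ :=
            mul_le_mul_of_nonneg_right (moment_bound hres hρ0 hρr hM n) (norm_nonneg y)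
    have hpara : ∀ v : H, ‖S v‖ ^ 2 ≤ ‖S (S v)‖ * ‖v‖ := by
      intro v
      have := hT μ v
      simpa [hS] using this
    have hchain := para_pow S hpara x
    have hρd : ρ * d ≤ e / 2 := by
      have h1 : ρ ≤ e / (2 * d) := min_le_right _ _
      have h2 : ρ * (2 * d) ≤ e := (le_div_iff₀ (by positivity)).mp h1
      linarith
    have key : ∀ n : ℕ, 2 ^ n * e ≤ 2 * Real.pi * M * ‖y‖ * ρ ^ 2 := by
      intro n
      set C := 2 * Real.pi * M * ‖y‖ with hCdef
      have hC0 : 0 ≤ C := by positivity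
      have h1 : e ^ (n + 1) ≤ ‖(S ^ (n + 1)) x‖ * d ^ n := hchain n
      have h2 : ‖(S ^ (n + 1)) x‖ ≤ 2 * Real.pi * ρ * (ρ ^ (n + 1) * M) * ‖y‖ := hn (n + 1)
      have h3 : e ^ (n + 1) ≤ C * ρ ^ 2 * (ρ * d) ^ n := by
        calc e ^ (n + 1) ≤ 2 * Real.pi * ρ * (ρ ^ (n + 1) * M) * ‖y‖ * d ^ n :=
              h1.trans (mul_le_mul_of_nonneg_right h2 (by positivity))
          _ = C * ρ ^ 2 * (ρ * d) ^ n := by rw [hCdef, mul_pow]; ring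
      have h4 : (ρ * d) ^ n ≤ (e / 2) ^ n :=
        pow_le_pow_left₀ (by positivity) hρd n
      have h5 : e ^ (n + 1) ≤ C * ρ ^ 2 * (e ^ n / 2 ^ n) := by
        rw [← div_pow]
        exact h3.trans (mul_le_mul_of_nonneg_left h4 (by positivity))
      have hepow : (0 : ℝ) < e ^ n := pow_pos he n
      have h6 : e ^ n * e * 2 ^ n ≤ C * ρ ^ 2 * e ^ n := by
        rw [pow_succ, ← mul_div_assoc] at h5
        exact (le_div_iff₀ (pow_pos (by norm_num : (0:ℝ) < 2) n)).mp h5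
      have h7 : 2 ^ n * e * e ^ n ≤ C * ρ ^ 2 * e ^ n := by nlinarith [h6]
      exact le_of_mul_le_mul_right h7 hepow
    obtain ⟨n, hn'⟩ := pow_unbounded_of_one_lt (2 * Real.pi * M * ‖y‖ * ρ ^ 2 / e)
      (by norm_num : (1 : ℝ) < 2)
    rw [div_lt_iff₀ he] at hn'
    have := key n
    linarith
  have hP0 : P = 0 := by
    ext y
    simpa using hinj _ (hSP y)
  have hU : IsUnit S :=
    isUnit_of_proj_zero hres (by linarith : 0 < r / 2) (by linarith) (hP ▸ hP0)
  exact spectrum.not_isUnit_of_zero_mem (R := ℂ) h0 hU
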